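/- On the interval Ω = (−1,1) ⊂ ℝ, the functions u₁(x) = 0 and u₂(x) = ½x² − ½ are both viscosity solutions of (u')²u'' − |u'|² = 0 on (−1,1) with u₁(−1) = u₁(1) = u₂(−1) = u₂(1) = 0, and u₁ ≠ u₂. Hence the Dirichlet problem for the Aronsson equation Δ∞u − |Du|² = 0 may have more than one viscosity solution with prescribed boundary values. -/

import Mathlib

open Set MeasureTheory

noncomputable section

/-- `u` is a viscosity subsolution of `(u')²u'' - |u'|² = 0` on `Ω ⊆ ℝ`. -/
def IsSubsol1 (Ω : Set ℝ) (u : ℝ → ℝ) : Prop :=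
  ∀ φ : ℝ → ℝ, ContDiff ℝ 2 φ → ∀ x₀ ∈ Ω,
    IsLocalMaxOn (fun x => u x - φ x) Ω x₀ →
    (deriv φ x₀) ^ 2 * deriv (deriv φ) x₀ - |deriv φ x₀| ^ 2 ≥ 0

/-- `u` is a viscosity supersolution of `(u')²u'' - |u'|² = 0` on `Ω ⊆ ℝ`. -/
def IsSupersol1 (Ω : Set ℝ) (u : ℝ → ℝ) : Prop :=
  ∀ φ : ℝ → ℝ, ContDiff ℝ 2 φ → ∀ x₀ ∈ Ω,
    IsLocalMinOn (fun x => u x - φ x) Ω x₀ →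
    (deriv φ x₀) ^ 2 * deriv (deriv φ) x₀ - |deriv φ x₀| ^ 2 ≤ 0

/-- `u` is a viscosity solution of `(u')²u'' - |u'|² = 0` on `Ω ⊆ ℝ`. -/
def IsSol1 (Ω : Set ℝ) (u : ℝ → ℝ) : Prop :=
  IsSubsol1 Ω u ∧ IsSupersol1 Ω u

/-- `u` is an absolute minimizer for the Hamiltonian `H = H(p, z)` on `Ω ⊆ ℝ`. -/
def IsAbsMin1 (H : ℝ → ℝ → ℝ) (Ω : Set ℝ) (u : ℝ → ℝ) : Prop :=
  ∀ V : Set ℝ, IsOpen V → closure V ⊆ Ω →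
    ∀ v : ℝ → ℝ, (∃ K : NNReal, LipschitzOnWith K v (closure V)) →
      (∀ x ∈ frontier V, v x = u x) →
      essSup (fun x => H (deriv u x) (u x)) (volume.restrict V) ≤
        essSup (fun x => H (deriv v x) (v x)) (volume.restrict V)

open Filter Topology

lemma secondDeriv_nonpos_of_isLocalMax' {f : ℝ → ℝ} {a : ℝ}
    (hf : ContDiff ℝ 2 f) (h : IsLocalMax f a) : deriv (deriv f) a ≤ 0 := by
  have hd1 : Differentiable ℝ f := hf.differentiable (by norm_num)
  have hd2 : Differentiable ℝ (deriv f) := by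
    have := (contDiff_succ_iff_deriv (n := 1)).mp (by exact_mod_cast hf)
    exact this.2.2.differentiable one_ne_zero
  have ha : deriv f a = 0 := h.deriv_eq_zero
  by_contra hpos
  push_neg at hpos
  have hg : HasDerivAt (deriv f) (deriv (deriv f) a) a := (hd2 a).hasDerivAt
  rw [hasDerivAt_iff_tendsto_slope] at hg
  have h1 : ∀ᶠ y in 𝓝[≠] a, 0 < slope (deriv f) a y :=
    hg.eventually (eventually_gt_nhds hpos)
  have h1' : ∀ᶠ y in 𝓝[>] a, 0 < slope (deriv f) a y :=
    h1.filter_mono (nhdsWithin_mono a fun y hy => ne_of_gt hy)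
  have h2' : ∀ᶠ y in 𝓝[>] a, f y ≤ f a := h.filter_mono nhdsWithin_le_nhds
  have hcomb := h1'.and h2'
  rw [eventually_iff, mem_nhdsGT_iff_exists_Ioo_subset] at hcomb
  obtain ⟨u, hu, hsub⟩ := hcomb
  have hau : a < u := hu
  set b := (a + u) / 2 with hb
  have hb1 : a < b := by simp only [hb]; linarith
  have hb2 : b < u := by simp only [hb]; linarith
  have hmono : StrictMonoOn f (Icc a b) := by
    apply strictMonoOn_of_deriv_pos (convex_Icc a b) hd1.continuous.continuousOn
    intro x hx
    rw [interior_Icc] at hx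
    have hx' : x ∈ Ioo a u := ⟨hx.1, lt_trans hx.2 hb2⟩
    have hxpos := (hsub hx').1
    rw [slope_def_field, ha, sub_zero] at hxpos
    have hxa : 0 < x - a := sub_pos.2 hx.1
    rcases div_pos_iff.mp hxpos with ⟨h', _⟩ | ⟨_, h'⟩
    · exact h'
    · linarith
  have hfb : f a < f b := hmono (left_mem_Icc.2 hb1.le) (right_mem_Icc.2 hb1.le) hb1
  have : f b ≤ f a := (hsub ⟨hb1, hb2⟩).2
  linarith

lemma secondDeriv_nonneg_of_isLocalMin' {f : ℝ → ℝ} {a : ℝ}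
    (hf : ContDiff ℝ 2 f) (h : IsLocalMin f a) : 0 ≤ deriv (deriv f) a := by
  have hneg := secondDeriv_nonpos_of_isLocalMax' (f := fun x => -f x) hf.neg h.neg
  have e1 : (deriv fun x => -f x) = fun x => -deriv f x := by
    funext x; exact deriv.neg
  rw [e1] at hneg
  have e2 : deriv (fun x => -deriv f x) a = -deriv (deriv f) a := deriv.neg
  rw [e2] at hneg
  linarith

lemma deriv_u2 : deriv (fun x : ℝ => (1 / 2) * x ^ 2 - 1 / 2) = fun x => x := by
  funext x
  have h : HasDerivAt (fun y : ℝ => (1 / 2) * y ^ 2 - 1 / 2) x x := by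
    simpa using ((hasDerivAt_pow 2 x).const_mul (1 / 2 : ℝ)).sub_const (1 / 2)
  exact h.deriv

lemma u2_contDiff : ContDiff ℝ 2 (fun x : ℝ => (1 / 2) * x ^ 2 - 1 / 2) := by
  apply ContDiff.sub _ contDiff_const
  exact contDiff_const.mul (contDiff_id.pow 2)

/-- Example I: `u₁ = 0` and `u₂ = ½x² - ½` are two distinct viscosity
solutions of `(u')²u'' - |u'|² = 0` on `(-1,1)` both vanishing at `±1`; hence the
Dirichlet problem for this Aronsson equation can have more than one solution. -/
theorem example_two_solutions :
    IsSol1 (Set.Ioo (-1 : ℝ) 1) (fun _ => (0 : ℝ)) ∧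
    IsSol1 (Set.Ioo (-1 : ℝ) 1) (fun x => (1 / 2) * x ^ 2 - 1 / 2) ∧
    (fun _ : ℝ => (0 : ℝ)) (-1) = 0 ∧ (fun _ : ℝ => (0 : ℝ)) 1 = 0 ∧
    (fun x : ℝ => (1 / 2) * x ^ 2 - 1 / 2) (-1) = 0 ∧
    (fun x : ℝ => (1 / 2) * x ^ 2 - 1 / 2) 1 = 0 ∧
    ∃ x ∈ Set.Ioo (-1 : ℝ) 1,
      (fun _ : ℝ => (0 : ℝ)) x ≠ (fun x : ℝ => (1 / 2) * x ^ 2 - 1 / 2) x := by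
  refine ⟨⟨?_, ?_⟩, ⟨?_, ?_⟩, by norm_num, by norm_num, by norm_num, by norm_num,
    0, by norm_num, by norm_num⟩
  -- u₁ subsolution
  · intro φ hφ x₀ hx₀ hmax
    have hΩ : Set.Ioo (-1 : ℝ) 1 ∈ 𝓝 x₀ := isOpen_Ioo.mem_nhds hx₀
    have hloc : IsLocalMax (fun x => (0 : ℝ) - φ x) x₀ := hmax.isLocalMax hΩ
    have hdφ : deriv φ x₀ = 0 := by
      have h0 : deriv (fun x => (0 : ℝ) - φ x) x₀ = 0 := hloc.deriv_eq_zero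
      have : deriv (fun x => (0 : ℝ) - φ x) x₀ = -deriv φ x₀ := by
        simp [deriv.neg]
      rw [this] at h0; linarith
    simp [hdφ]
  -- u₁ supersolution
  · intro φ hφ x₀ hx₀ hmin
    have hΩ : Set.Ioo (-1 : ℝ) 1 ∈ 𝓝 x₀ := isOpen_Ioo.mem_nhds hx₀
    have hloc : IsLocalMin (fun x => (0 : ℝ) - φ x) x₀ := hmin.isLocalMin hΩ
    have hdφ : deriv φ x₀ = 0 := by
      have h0 : deriv (fun x => (0 : ℝ) - φ x) x₀ = 0 := hloc.deriv_eq_zero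
      have : deriv (fun x => (0 : ℝ) - φ x) x₀ = -deriv φ x₀ := by
        simp [deriv.neg]
      rw [this] at h0; linarith
    simp [hdφ]
  -- u₂ subsolution
  · intro φ hφ x₀ hx₀ hmax
    have hΩ : Set.Ioo (-1 : ℝ) 1 ∈ 𝓝 x₀ := isOpen_Ioo.mem_nhds hx₀
    have hloc : IsLocalMax (fun x => ((1 / 2) * x ^ 2 - 1 / 2) - φ x) x₀ := hmax.isLocalMax hΩ
    have hψ : ContDiff ℝ 2 (fun x => ((1 / 2) * x ^ 2 - 1 / 2 : ℝ) - φ x) := u2_contDiff.sub hφ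
    have hdφdiff : Differentiable ℝ (deriv φ) := by
      have := (contDiff_succ_iff_deriv (n := 1)).mp (by exact_mod_cast hφ)
      exact this.2.2.differentiable one_ne_zero
    have hφdiff : Differentiable ℝ φ := hφ.differentiable (by norm_num)
    have hψd : deriv (fun x => ((1 / 2) * x ^ 2 - 1 / 2 : ℝ) - φ x) = fun x => x - deriv φ x := by
      funext x
      rw [deriv_fun_sub ((u2_contDiff.differentiable (by norm_num)) x) (hφdiff x), deriv_u2]
    have hdφ : deriv φ x₀ = x₀ := by
      have h0 := hloc.deriv_eq_zero
      rw [hψd] at h0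
      simp only at h0
      linarith
    have h2 := secondDeriv_nonpos_of_isLocalMax' hψ hloc
    rw [hψd] at h2
    have : deriv (fun x => x - deriv φ x) x₀ = 1 - deriv (deriv φ) x₀ :=
      ((hasDerivAt_id x₀).sub (hdφdiff x₀).hasDerivAt).deriv
    rw [this] at h2
    have hsq : |deriv φ x₀| ^ 2 = (deriv φ x₀) ^ 2 := sq_abs _
    rw [hsq, hdφ]
    nlinarith [sq_nonneg x₀]
  -- u₂ supersolution
  · intro φ hφ x₀ hx₀ hmin
    have hΩ : Set.Ioo (-1 : ℝ) 1 ∈ 𝓝 x₀ := isOpen_Ioo.mem_nhds hx₀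
    have hloc : IsLocalMin (fun x => ((1 / 2) * x ^ 2 - 1 / 2) - φ x) x₀ := hmin.isLocalMin hΩ
    have hψ : ContDiff ℝ 2 (fun x => ((1 / 2) * x ^ 2 - 1 / 2 : ℝ) - φ x) := u2_contDiff.sub hφ
    have hdφdiff : Differentiable ℝ (deriv φ) := by
      have := (contDiff_succ_iff_deriv (n := 1)).mp (by exact_mod_cast hφ)
      exact this.2.2.differentiable one_ne_zero
    have hφdiff : Differentiable ℝ φ := hφ.differentiable (by norm_num)
    have hψd : deriv (fun x => ((1 / 2) * x ^ 2 - 1 / 2 : ℝ) - φ x) = fun x => x - deriv φ x := by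
      funext x
      rw [deriv_fun_sub ((u2_contDiff.differentiable (by norm_num)) x) (hφdiff x), deriv_u2]
    have hdφ : deriv φ x₀ = x₀ := by
      have h0 := hloc.deriv_eq_zero
      rw [hψd] at h0
      simp only at h0
      linarith
    have h2 := secondDeriv_nonneg_of_isLocalMin' hψ hloc
    rw [hψd] at h2
    have : deriv (fun x => x - deriv φ x) x₀ = 1 - deriv (deriv φ) x₀ :=
      ((hasDerivAt_id x₀).sub (hdφdiff x₀).hasDerivAt).deriv
    rw [this] at h2
    have hsq : |deriv φ x₀| ^ 2 = (deriv φ x₀) ^ 2 := sq_abs _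
    rw [hsq, hdφ]
    nlinarith [sq_nonneg x₀]
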